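/- Let a, b, c > 0 be side lengths of a hyperbolic triangle in which the angle opposite the side of length c equals 2π/3. Then 2c > 2b + a. -/

import Mathlib

/-- If `a`, `b`, `c > 0` are side lengths of a hyperbolic triangle in which the angle
opposite the side of length `c` equals `2π/3` (encoded by the hyperbolic law of cosines
`cosh c = cosh a * cosh b + (1/2) * sinh a * sinh b`), then `2c > 2b + a`. -/
theorem hyperbolic_triangle_two_c_gt (a b c : ℝ) (ha : 0 < a) (hb : 0 < b) (hc : 0 < c)
    (h : Real.cosh c = Real.cosh a * Real.cosh b + (1 / 2) * Real.sinh a * Real.sinh b) :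
    2 * c > 2 * b + a := by
  have key : Real.cosh (b + a / 2) < Real.cosh c := by
    rw [h]
    set u := Real.exp (a / 2) with hu_def
    set t := Real.exp b with ht_def
    have hu : 1 < u := Real.one_lt_exp_iff.mpr (by linarith)
    have ht : 1 < t := Real.one_lt_exp_iff.mpr hb
    have hu0 : 0 < u := by linarith
    have ht0 : 0 < t := by linarith
    have ea : Real.exp a = u * u := by
      rw [hu_def, ← Real.exp_add]; ring_nf
    have eba : Real.exp (b + a / 2) = t * u := by
      rw [hu_def, ht_def, ← Real.exp_add]
    simp only [Real.cosh_eq, Real.sinh_eq, Real.exp_neg]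
    rw [ea, eba, ← ht_def]
    have h1 : 0 < (u - 1) ^ 2 := pow_pos (by linarith) 2
    have h2 : 0 < t ^ 2 := by positivity
    rw [div_lt_iff₀ (by norm_num : (0:ℝ) < 2)] at *
    field_simp
    have hpos : 0 < t ^ 2 * ((u - 1) ^ 2 * (3 * u ^ 2 + 2 * u + 1)) +
        (u - 1) ^ 2 * (u ^ 2 + 2 * u + 3) :=
      add_pos (mul_pos h2 (mul_pos h1 (by positivity))) (mul_pos h1 (by positivity))
    nlinarith [mul_pos (show (0:ℝ) < 8 * u ^ 3 * t ^ 2 by positivity) hpos]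
  have habs : |b + a / 2| < |c| := (Real.cosh_lt_cosh).mp key
  have h1 : |b + a / 2| = b + a / 2 := abs_of_pos (by linarith)
  have h2 : |c| = c := abs_of_pos hc
  rw [h1, h2] at habs
  linarith
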